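/- arXiv:2309.08718 — 3 statements merged into one kernel-verified Lean document; each statement's English description precedes it below -/
import Mathlib

section
/- The class of languages generated by admissible signed grammars is closed under complementation: if L ⊆ Σ* is generated by an admissible signed grammar over Σ, then its complement Σ* \ L is also generated by an admissible signed grammar over Σ. -/
/-- A parse-tree node: either a terminal leaf or an internal node labeled by a
nonterminal with a list of children. -/
inductive PTree (N : Type) (T : Type) : Type where
  | leaf (t : T) : PTree N T
  | node (A : N) (children : List (PTree N T)) : PTree N T

namespace PTree

variable {N T : Type}

/-- The symbol (nonterminal or terminal) labeling the root of a tree. -/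
def toSymbol : PTree N T → N ⊕ T
  | leaf t => Sum.inr t
  | node A _ => Sum.inl A

/-- The yield of a parse tree: the word spelled by its leaves. -/
def yield : PTree N T → List T
  | leaf t => [t]
  | node _ cs => cs.attach.flatMap (fun c => yield c.1)
decreasing_by simp only [PTree.node.sizeOf_spec]; have h := List.sizeOf_lt_of_mem c.2; omega

/-- The sign of a parse tree w.r.t. a sign assignment on productions:
the product of the signs of the productions used at its nodes. -/
def sign (σ : N × List (N ⊕ T) → ℤ) : PTree N T → ℤ
  | leaf _ => 1
  | node A cs => σ (A, cs.map toSymbol) * (cs.attach.map (fun c => sign σ c.1)).prod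
decreasing_by simp only [PTree.node.sizeOf_spec]; have h := List.sizeOf_lt_of_mem c.2; omega

/-- Validity of a parse tree w.r.t. a set of productions: at every internal node,
the node label together with the list of symbols of its children is a production. -/
inductive Valid (R : Set (N × List (N ⊕ T))) : PTree N T → Prop where
  | leaf (t : T) : Valid R (PTree.leaf t)
  | node (A : N) (cs : List (PTree N T)) :
      (A, cs.map toSymbol) ∈ R → (∀ c ∈ cs, Valid R c) → Valid R (PTree.node A cs)

end PTree

/-- A signed grammar over a (finite) terminal alphabet `T`: a context-free grammar
with finitely many nonterminals and productions, together with a sign `1` or `-1`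
attached to each production. -/
structure SignedGrammar (T : Type) : Type 1 where
  /-- the type of nonterminals -/
  N : Type
  finN : Finite N
  /-- the start symbol -/
  start : N
  /-- the productions `A → α`, `α ∈ (N ∪ T)*` -/
  rules : Set (N × List (N ⊕ T))
  finRules : rules.Finite
  /-- the sign of each production -/
  sign : N × List (N ⊕ T) → ℤ
  sign_valid : ∀ r ∈ rules, sign r = 1 ∨ sign r = -1

namespace SignedGrammar

variable {T : Type}

/-- A parse tree over the grammar: a valid tree whose root is labeled by the start symbol. -/
def IsParseTree (G : SignedGrammar T) (t : PTree G.N T) : Prop :=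
  PTree.Valid G.rules t ∧ t.toSymbol = Sum.inl G.start

/-- The set of parse trees over `G` with yield `w`. -/
def parseTreesOf (G : SignedGrammar T) (w : List T) : Set (PTree G.N T) :=
  {t | G.IsParseTree t ∧ t.yield = w}

/-- `G` is admissible if every word has only finitely many parse trees. -/
def Admissible (G : SignedGrammar T) : Prop :=
  ∀ w : List T, (G.parseTreesOf w).Finite

/-- `n_w(G)`: the sum of the signs of all parse trees over `G` with yield `w`. -/
noncomputable def count (G : SignedGrammar T) (w : List T) : ℤ :=
  ∑ᶠ t ∈ G.parseTreesOf w, t.sign G.sign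

/-- `G` generates the language `L` if `G` is admissible, `n_w(G) = 1` for every
`w ∈ L` and `n_w(G) = 0` for every `w ∉ L`. -/
def Generates (G : SignedGrammar T) (L : Language T) : Prop :=
  G.Admissible ∧ (∀ w ∈ L, G.count w = 1) ∧ (∀ w ∉ L, G.count w = 0)

/-- An ordinary context-free grammar: every production has sign `+1`. -/
def Ordinary (G : SignedGrammar T) : Prop :=
  ∀ r ∈ G.rules, G.sign r = 1

/-- The language generated by `G` in the usual sense: all yields of parse trees. -/
def language (G : SignedGrammar T) : Language T :=
  {w | ∃ t : PTree G.N T, G.IsParseTree t ∧ t.yield = w}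

/-- `G` is unambiguous if every word has at most one parse tree. -/
def Unambiguous (G : SignedGrammar T) : Prop :=
  ∀ t₁ t₂ : PTree G.N T, G.IsParseTree t₁ → G.IsParseTree t₂ →
    t₁.yield = t₂.yield → t₁ = t₂

/-- The number of parse trees of `G` with yield `w` (degree of ambiguity of `w`). -/
noncomputable def ambCount (G : SignedGrammar T) (w : List T) : ℕ :=
  Nat.card {t : PTree G.N T // t ∈ G.parseTreesOf w}

end SignedGrammar



namespace SGAux

open PTree

variable {N T : Type}

theorem ptree_ind {motive : PTree N T → Prop}
    (hleaf : ∀ t, motive (.leaf t))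
    (hnode : ∀ A cs, (∀ c ∈ cs, motive c) → motive (.node A cs)) :
    ∀ t, motive t
  | .leaf t => hleaf t
  | .node A cs => hnode A cs (fun c hc => ptree_ind hleaf hnode c)
decreasing_by simp only [PTree.node.sizeOf_spec]; have := List.sizeOf_lt_of_mem hc; omega

@[simp] theorem toSymbol_leaf (t : T) : (PTree.leaf t : PTree N T).toSymbol = .inr t := rfl

@[simp] theorem toSymbol_node (A : N) (cs : List (PTree N T)) :
    (PTree.node A cs).toSymbol = .inl A := rfl

@[simp] theorem yield_leaf (t : T) : (PTree.leaf t : PTree N T).yield = [t] := by rw [PTree.yield]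

@[simp] theorem sign_leaf (σ : N × List (N ⊕ T) → ℤ) (t : T) :
    (PTree.leaf t : PTree N T).sign σ = 1 := by rw [PTree.sign]

theorem yield_node (A : N) (cs : List (PTree N T)) :
    (PTree.node A cs).yield = cs.flatMap PTree.yield := by
  rw [PTree.yield]
  simp [List.flatMap, Function.comp]

theorem sign_node (σ : N × List (N ⊕ T) → ℤ) (A : N) (cs : List (PTree N T)) :
    (PTree.node A cs).sign σ =
      σ (A, cs.map PTree.toSymbol) * (cs.map (PTree.sign σ)).prod := by
  rw [PTree.sign]
  congr 1
  rw [show (fun (c : {x // x ∈ cs}) => PTree.sign σ c.1) = (PTree.sign σ) ∘ Subtype.val from rfl,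
    ← List.map_map, List.attach_map_subtype_val]

end SGAux

namespace SGAux

open PTree

variable {T : Type}

/-- Lift a symbol of `G` to the complement grammar. -/
def liftSym (G : SignedGrammar T) : (G.N ⊕ T) → (Option (G.N ⊕ Unit) ⊕ T)
  | .inl A => .inl (some (.inl A))
  | .inr t => .inr t

def unliftN (G : SignedGrammar T) : Option (G.N ⊕ Unit) → G.N
  | some (.inl A) => A
  | _ => G.start

def unliftSym (G : SignedGrammar T) : (Option (G.N ⊕ Unit) ⊕ T) → (G.N ⊕ T)
  | .inl x => .inl (unliftN G x)
  | .inr t => .inr t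

theorem unlift_lift_sym (G : SignedGrammar T) (s : G.N ⊕ T) :
    unliftSym G (liftSym G s) = s := by
  cases s <;> rfl

theorem liftSym_inj (G : SignedGrammar T) : Function.Injective (liftSym G) :=
  fun a b h => by rw [← unlift_lift_sym G a, h, unlift_lift_sym]

/-- the start symbol of the `Σ*` part -/
abbrev A0 (G : SignedGrammar T) : Option (G.N ⊕ Unit) := some (.inr ())


open scoped Classical in
/-- The complement grammar. -/
noncomputable def compG (G : SignedGrammar T) [Fintype T] : SignedGrammar T where
  N := Option (G.N ⊕ Unit)
  finN := by haveI := G.finN; haveI := Fintype.ofFinite G.N; exact inferInstance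
  start := none
  rules :=
    {(none, [.inl (A0 G)]), (none, [.inl (some (.inl G.start))]), (A0 G, [])} ∪
    (⋃ t : T, {(A0 G, [.inr t, .inl (A0 G)])}) ∪
    ((fun r => (some (.inl r.1), r.2.map (liftSym G))) '' G.rules)
  finRules := by
    refine Set.Finite.union (Set.Finite.union ?_ ?_) (G.finRules.image _)
    · exact (Set.finite_singleton _).insert _ |>.insert _
    · exact Set.finite_iUnion (fun t => Set.finite_singleton _)
  sign := fun r =>
    match r.1 with
    | none => if r.2 = [.inl (some (.inl G.start))] then -1 else 1
    | some (.inr _) => 1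
    | some (.inl A) => G.sign (A, r.2.map (unliftSym G))
  sign_valid := by
    rintro ⟨A, α⟩ hr
    rcases hr with (hr | hr)
    · rcases hr with (hr | hr)
      · simp only [Set.mem_insert_iff, Set.mem_singleton_iff, Prod.mk.injEq] at hr
        rcases hr with ⟨hA, hα⟩ | ⟨hA, hα⟩ | ⟨hA, hα⟩ <;> subst hA <;> subst hα <;> simp
      · simp only [Set.mem_iUnion, Set.mem_singleton_iff, Prod.mk.injEq] at hr
        obtain ⟨t, hA, hα⟩ := hr
        subst hA; subst hα; simp
    · obtain ⟨⟨B, β⟩, hmem, heq⟩ := hr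
      cases heq
      simp only [List.map_map]
      have h2 : (unliftSym G) ∘ (liftSym G) = id := funext (unlift_lift_sym G)
      rw [h2, List.map_id]
      exact G.sign_valid _ hmem

attribute [reducible] compG

variable [Fintype T]

theorem compG_sign_none_all (G : SignedGrammar T) :
    (compG G).sign (none, [.inl (A0 G)]) = 1 := by
  simp [compG, A0]

theorem compG_sign_none_start (G : SignedGrammar T) :
    (compG G).sign (none, [.inl (some (.inl G.start))]) = -1 := by
  simp [compG]

theorem compG_sign_lift (G : SignedGrammar T) (A : G.N) (α : List (G.N ⊕ T)) :
    (compG G).sign (some (.inl A), α.map (liftSym G)) = G.sign (A, α) := by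
  simp only [compG, List.map_map]
  have : (unliftSym G) ∘ (liftSym G) = id := funext (unlift_lift_sym G)
  rw [this, List.map_id]


def lift (G : SignedGrammar T) : PTree G.N T → PTree (compG G).N T
  | .leaf t => .leaf t
  | .node A cs => .node (some (.inl A)) (cs.attach.map (fun c => lift G c.1))
decreasing_by simp only [PTree.node.sizeOf_spec]; have := List.sizeOf_lt_of_mem c.2; omega

theorem lift_node (G : SignedGrammar T) (A : G.N) (cs : List (PTree G.N T)) :
    lift G (.node A cs) = .node (some (.inl A)) (cs.map (lift G)) := by
  rw [lift]
  congr 1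
  rw [show (fun (c : {x // x ∈ cs}) => lift G c.1) = (lift G) ∘ Subtype.val from rfl,
    ← List.map_map, List.attach_map_subtype_val]

def unlift (G : SignedGrammar T) : PTree (compG G).N T → PTree G.N T
  | .leaf t => .leaf t
  | .node A cs => .node (unliftN G A) (cs.attach.map (fun c => unlift G c.1))
decreasing_by simp only [PTree.node.sizeOf_spec]; have := List.sizeOf_lt_of_mem c.2; omega

theorem unlift_node (G : SignedGrammar T) (A : Option (G.N ⊕ Unit))
    (cs : List (PTree (compG G).N T)) :
    unlift G (.node A cs) = .node (unliftN G A) (cs.map (unlift G)) := by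
  rw [unlift]
  congr 1
  rw [show (fun (c : {x // x ∈ cs}) => unlift G c.1) = (unlift G) ∘ Subtype.val from rfl,
    ← List.map_map, List.attach_map_subtype_val]

theorem unlift_lift (G : SignedGrammar T) : ∀ u, unlift G (lift G u) = u := by
  refine ptree_ind (fun t => by rw [lift, unlift]) (fun A cs ih => ?_)
  rw [lift_node, unlift_node, List.map_map]
  simp only [unliftN]
  conv_rhs => rw [← List.map_id cs]
  exact congrArg _ (List.map_congr_left (fun c hc => by simpa using ih c hc))

theorem lift_inj (G : SignedGrammar T) : Function.Injective (lift G) :=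
  fun a b h => by rw [← unlift_lift G a, h, unlift_lift]

theorem lift_toSymbol (G : SignedGrammar T) (u : PTree G.N T) :
    (lift G u).toSymbol = liftSym G u.toSymbol := by
  cases u with
  | leaf t => rw [lift]; rfl
  | node A cs => rw [lift_node]; rfl

theorem unlift_toSymbol (G : SignedGrammar T) (u : PTree (compG G).N T) :
    (unlift G u).toSymbol = unliftSym G u.toSymbol := by
  cases u with
  | leaf t => rw [unlift]; rfl
  | node A cs => rw [unlift_node]; rfl

theorem lift_yield (G : SignedGrammar T) : ∀ u, (lift G u).yield = u.yield := by
  refine ptree_ind (fun t => by rw [lift, PTree.yield, PTree.yield]) (fun A cs ih => ?_)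
  rw [lift_node, yield_node, yield_node, List.flatMap_map]
  exact List.flatMap_congr (fun c hc => ih c hc)

/-- The unique all-words tree with given yield. -/
def allTree (G : SignedGrammar T) : List T → PTree (compG G).N T
  | [] => .node (A0 G) []
  | t :: w => .node (A0 G) [.leaf t, allTree G w]

theorem allTree_yield (G : SignedGrammar T) : ∀ w, (allTree G w).yield = w
  | [] => by rw [allTree, yield_node]; rfl
  | t :: w => by
      rw [allTree, yield_node]
      simp [PTree.yield, allTree_yield G w]

theorem allTree_toSymbol (G : SignedGrammar T) (w : List T) :
    (allTree G w).toSymbol = .inl (A0 G) := by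
  cases w <;> rfl

theorem lift_sign (G : SignedGrammar T) : ∀ u, (lift G u).sign (compG G).sign = u.sign G.sign := by
  refine ptree_ind (fun t => by rw [lift, PTree.sign, PTree.sign]) (fun A cs ih => ?_)
  rw [lift_node, sign_node, sign_node, List.map_map, List.map_map]
  have h1 : cs.map (toSymbol ∘ lift G) = (cs.map toSymbol).map (liftSym G) := by
    rw [List.map_map]
    exact List.map_congr_left (fun c _ => lift_toSymbol G c)
  rw [h1, compG_sign_lift]
  congr 1
  exact congrArg List.prod (List.map_congr_left (fun c hc => ih c hc))

theorem lift_valid (G : SignedGrammar T) :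
    ∀ u, PTree.Valid G.rules u → PTree.Valid (compG G).rules (lift G u) := by
  refine ptree_ind (fun t _ => by rw [lift]; exact .leaf t) (fun A cs ih hv => ?_)
  cases hv with
  | node _ _ hr hcs =>
    rw [lift_node]
    refine .node _ _ ?_ (fun c hc => ?_)
    · refine Set.mem_union_right _ ⟨(A, cs.map toSymbol), hr, ?_⟩
      simp only [List.map_map]
      congr 1
      exact List.map_congr_left (fun c _ => (lift_toSymbol G c).symm)
    · rcases List.mem_map.1 hc with ⟨u, hu, rfl⟩
      exact ih u hu (hcs u hu)

theorem allTree_sign (G : SignedGrammar T) : ∀ w, (allTree G w).sign (compG G).sign = 1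
  | [] => by
      rw [allTree, sign_node]
      simp [compG, A0]
  | t :: w => by
      rw [allTree, sign_node]
      have := allTree_sign G w
      simp only [List.map_cons, List.map_nil, List.prod_cons, List.prod_nil, this]
      have hleaf : (PTree.leaf t : PTree (compG G).N T).sign (compG G).sign = 1 := by
        rw [PTree.sign]
      rw [hleaf]
      simp [compG, A0, toSymbol]

theorem allTree_valid (G : SignedGrammar T) : ∀ w, PTree.Valid (compG G).rules (allTree G w)
  | [] => by
      rw [allTree]
      refine .node _ _ ?_ (by simp)
      exact Set.mem_union_left _ (Set.mem_union_left _ (by simp))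
  | t :: w => by
      rw [allTree]
      refine .node _ _ ?_ ?_
      · refine Set.mem_union_left _ (Set.mem_union_right _ ?_)
        simp only [Set.mem_iUnion, Set.mem_singleton_iff]
        exact ⟨t, by simp [allTree_toSymbol G w]⟩
      · rintro c hc
        simp only [List.mem_cons, List.not_mem_nil, or_false] at hc
        rcases hc with rfl | rfl
        · exact .leaf t
        · exact allTree_valid G w

end SGAux

namespace SGAux

open PTree

variable {T : Type} [Fintype T]

theorem mem_rules_none {G : SignedGrammar T} {α : List (Option (G.N ⊕ Unit) ⊕ T)}
    (h : ((none : (compG G).N), α) ∈ (compG G).rules) :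
    α = [.inl (A0 G)] ∨ α = [.inl (some (.inl G.start))] := by
  rcases h with ((h | h) | h)
  · simp only [Set.mem_insert_iff, Set.mem_singleton_iff, Prod.mk.injEq] at h
    rcases h with ⟨-, hα⟩ | ⟨-, hα⟩ | ⟨hA, -⟩
    · exact Or.inl hα
    · exact Or.inr hα
    · exact absurd hA (by simp [A0])
  · simp only [Set.mem_iUnion, Set.mem_singleton_iff, Prod.mk.injEq] at h
    obtain ⟨t, hA, -⟩ := h
    exact absurd hA (by simp [A0])
  · obtain ⟨⟨B, β⟩, -, heq⟩ := h
    exact absurd (congrArg Prod.fst heq) (by simp)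

theorem mem_rules_A0 {G : SignedGrammar T} {α : List (Option (G.N ⊕ Unit) ⊕ T)}
    (h : (A0 G, α) ∈ (compG G).rules) :
    α = [] ∨ ∃ t : T, α = [.inr t, .inl (A0 G)] := by
  rcases h with ((h | h) | h)
  · simp only [Set.mem_insert_iff, Set.mem_singleton_iff, Prod.mk.injEq] at h
    rcases h with ⟨hA, -⟩ | ⟨hA, -⟩ | ⟨-, hα⟩
    · exact absurd hA (by simp [A0])
    · exact absurd hA (by simp [A0])
    · exact Or.inl hα
  · simp only [Set.mem_iUnion, Set.mem_singleton_iff, Prod.mk.injEq] at h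
    obtain ⟨t, -, hα⟩ := h
    exact Or.inr ⟨t, hα⟩
  · obtain ⟨⟨B, β⟩, -, heq⟩ := h
    exact absurd (congrArg Prod.fst heq) (by simp [A0])

theorem mem_rules_inl {G : SignedGrammar T} {B : G.N} {α : List (Option (G.N ⊕ Unit) ⊕ T)}
    (h : ((some (.inl B) : Option (G.N ⊕ Unit)), α) ∈ (compG G).rules) :
    ∃ β, (B, β) ∈ G.rules ∧ α = β.map (liftSym G) := by
  rcases h with ((h | h) | h)
  · simp only [Set.mem_insert_iff, Set.mem_singleton_iff, Prod.mk.injEq] at h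
    rcases h with ⟨hA, -⟩ | ⟨hA, -⟩ | ⟨hA, -⟩ <;> exact absurd hA (by simp [A0])
  · simp only [Set.mem_iUnion, Set.mem_singleton_iff, Prod.mk.injEq] at h
    obtain ⟨t, hA, -⟩ := h
    exact absurd hA (by simp [A0])
  · obtain ⟨⟨C, β⟩, hmem, heq⟩ := h
    have h1 : (some (Sum.inl C) : Option (G.N ⊕ Unit)) = some (Sum.inl B) := congrArg Prod.fst heq
    have h2 : β.map (liftSym G) = α := congrArg Prod.snd heq
    obtain rfl : C = B := by simpa using h1
    exact ⟨β, hmem, h2.symm⟩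

theorem valid_A0_eq_allTree {G : SignedGrammar T} :
    ∀ t : PTree (compG G).N T, PTree.Valid (compG G).rules t →
      t.toSymbol = .inl (A0 G) → t = allTree G t.yield := by
  refine ptree_ind (fun t _ h => by simp at h) (fun A cs ih hv hs => ?_)
  obtain rfl : A = A0 G := by simpa using hs
  cases hv with
  | node _ _ hr hcs =>
    rcases mem_rules_A0 hr with h | ⟨t, h⟩
    · obtain rfl : cs = [] := by simpa using h
      rw [yield_node]
      rfl
    · obtain ⟨c1, c2, rfl⟩ : ∃ c1 c2, cs = [c1, c2] := by
        cases cs with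
        | nil => simp at h
        | cons c1 cs' =>
          cases cs' with
          | nil => simp at h
          | cons c2 cs'' =>
            cases cs'' with
            | cons c3 cs''' => simp at h
            | nil => exact ⟨c1, c2, rfl⟩
      simp only [List.map_cons, List.map_nil, List.cons.injEq, and_true] at h
      obtain ⟨h1, h2⟩ := h
      obtain rfl : c1 = .leaf t := by
        cases c1 with
        | leaf u =>
          obtain rfl : u = t := by simpa using h1
          rfl
        | node B ds => simp at h1
      have hc2 := ih c2 (by simp) (hcs c2 (by simp)) h2
      rw [yield_node]
      simp only [List.flatMap_cons, List.flatMap_nil, yield_leaf, List.append_nil,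
        List.singleton_append]
      rw [allTree, ← hc2]

theorem valid_inl_is_lift {G : SignedGrammar T} :
    ∀ t : PTree (compG G).N T, PTree.Valid (compG G).rules t →
      (∃ s, t.toSymbol = liftSym G s) →
      PTree.Valid G.rules (unlift G t) ∧ lift G (unlift G t) = t := by
  refine ptree_ind (fun t _ _ => ⟨by rw [unlift]; exact .leaf t, by rw [unlift, lift]⟩)
    (fun A cs ih hv hs => ?_)
  obtain ⟨s, hs⟩ := hs
  obtain ⟨B, rfl⟩ : ∃ B, A = some (.inl B) := by
    cases s with
    | inl B => exact ⟨B, by simpa [liftSym] using hs⟩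
    | inr t => simp [liftSym] at hs
  cases hv with
  | node _ _ hr hcs =>
    obtain ⟨β, hβ, hmap⟩ := mem_rules_inl hr
    have hch : ∀ c ∈ cs, PTree.Valid G.rules (unlift G c) ∧ lift G (unlift G c) = c := by
      intro c hc
      refine ih c hc (hcs c hc) ?_
      have : c.toSymbol ∈ cs.map toSymbol := List.mem_map_of_mem hc
      rw [hmap] at this
      obtain ⟨s', -, hs'⟩ := List.mem_map.1 this
      exact ⟨s', hs'.symm⟩
    rw [unlift_node]
    constructor
    · refine .node _ _ ?_ (fun c hc => ?_)
      · have : (cs.map (unlift G)).map toSymbol = β := by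
          rw [List.map_map]
          have h1 : cs.map (toSymbol ∘ unlift G) = (cs.map toSymbol).map (unliftSym G) := by
            rw [List.map_map]; exact List.map_congr_left (fun c _ => unlift_toSymbol G c)
          rw [h1, hmap, List.map_map,
            show (unliftSym G) ∘ (liftSym G) = id from funext (unlift_lift_sym G), List.map_id]
        rw [this]
        simpa [unliftN] using hβ
      · rcases List.mem_map.1 hc with ⟨u, hu, rfl⟩
        exact (hch u hu).1
    · rw [lift_node, List.map_map]
      simp only [unliftN]
      congr 1
      conv_rhs => rw [← List.map_id cs]
      exact List.map_congr_left (fun c hc => by simpa using (hch c hc).2)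

end SGAux

namespace SGAux

open PTree

variable {T : Type} [Fintype T]

theorem parse_char (G : SignedGrammar T) (w : List T) :
    (compG G).parseTreesOf w =
      (fun u => PTree.node (none : (compG G).N) [lift G u]) '' (G.parseTreesOf w) ∪
      {PTree.node (none : (compG G).N) [allTree G w]} := by
  ext t
  constructor
  · rintro ⟨⟨hv, hroot⟩, hy⟩
    obtain ⟨A, cs, rfl⟩ : ∃ A cs, t = PTree.node A cs := by
      cases t with
      | leaf u => exact absurd hroot (by simp [compG])
      | node A cs => exact ⟨A, cs, rfl⟩
    obtain rfl : A = none := by simpa [compG] using hroot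
    cases hv with
    | node _ _ hr hcs =>
      rcases mem_rules_none hr with h | h
      all_goals
        obtain ⟨c, rfl⟩ : ∃ c, cs = [c] := by
          cases cs with
          | nil => simp at h
          | cons c cs' =>
            cases cs' with
            | nil => exact ⟨c, rfl⟩
            | cons c2 cs'' => simp at h
      all_goals
        simp only [List.map_cons, List.map_nil, List.cons.injEq, and_true] at h
      all_goals
        rw [yield_node] at hy
        simp only [List.flatMap_cons, List.flatMap_nil, List.append_nil] at hy
      · -- all-words case
        right
        have := valid_A0_eq_allTree c (hcs c (by simp)) h
        rw [hy] at this
        simp only [Set.mem_singleton_iff]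
        rw [this]
      · -- lifted case
        left
        obtain ⟨hval, hlift⟩ := valid_inl_is_lift c (hcs c (by simp))
          ⟨.inl G.start, by rw [h]; rfl⟩
        refine ⟨unlift G c, ⟨⟨hval, ?_⟩, ?_⟩,
          congrArg (fun x => PTree.node (none : (compG G).N) [x]) hlift⟩
        · have := lift_toSymbol G (unlift G c)
          rw [hlift, h] at this
          exact liftSym_inj G this.symm
        · rw [← lift_yield G (unlift G c), hlift, hy]
  · rintro (⟨u, ⟨⟨hval, hroot⟩, hy⟩, rfl⟩ | ht)
    · refine ⟨⟨?_, by simp [compG]⟩, ?_⟩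
      · refine .node _ _ ?_ (fun c hc => ?_)
        · have : (lift G u).toSymbol = .inl (some (.inl G.start)) := by
            rw [lift_toSymbol, hroot]; rfl
          simp only [List.map_cons, List.map_nil, this]
          exact Set.mem_union_left _ (Set.mem_union_left _ (by simp))
        · simp only [List.mem_cons, List.not_mem_nil, or_false] at hc
          subst hc
          exact lift_valid G u hval
      · rw [yield_node]
        simp only [List.flatMap_cons, List.flatMap_nil, List.append_nil]
        exact (lift_yield G u).trans hy
    · simp only [Set.mem_singleton_iff] at ht
      subst ht
      refine ⟨⟨?_, by simp [compG]⟩, ?_⟩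
      · refine .node _ _ ?_ (fun c hc => ?_)
        · simp only [List.map_cons, List.map_nil, allTree_toSymbol]
          exact Set.mem_union_left _ (Set.mem_union_left _ (by cases w <;> simp [allTree, A0]))
        · simp only [List.mem_cons, List.not_mem_nil, or_false] at hc
          subst hc
          exact allTree_valid G w
      · rw [yield_node]
        simp only [List.flatMap_cons, List.flatMap_nil, List.append_nil]
        exact allTree_yield G w

theorem compG_count (G : SignedGrammar T) (hadm : G.Admissible) (w : List T) :
    (compG G).count w = 1 - G.count w := by
  unfold SignedGrammar.count
  rw [parse_char]
  have hinj : Set.InjOn (fun u => PTree.node (none : (compG G).N) [lift G u])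
      (G.parseTreesOf w) := by
    intro a _ b _ h
    simp only [PTree.node.injEq, List.cons.injEq, and_true, true_and] at h
    exact lift_inj G h
  have hdisj : Disjoint
      ((fun u => PTree.node (none : (compG G).N) [lift G u]) '' (G.parseTreesOf w))
      {PTree.node (none : (compG G).N) [allTree G w]} := by
    rw [Set.disjoint_singleton_right]
    rintro ⟨u, ⟨⟨-, hroot⟩, -⟩, heq⟩
    simp only [PTree.node.injEq, List.cons.injEq, and_true, true_and] at heq
    have h1 : (lift G u).toSymbol = .inl (some (.inl G.start)) := by
      rw [lift_toSymbol, hroot]; rfl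
    rw [heq, allTree_toSymbol] at h1
    exact absurd h1 (by simp [A0])
  refine Eq.trans (finsum_mem_union hdisj ((hadm w).image _) (Set.finite_singleton _)) ?_
  rw [finsum_mem_singleton]
  have hall : (PTree.node (none : (compG G).N) [allTree G w]).sign (compG G).sign = 1 := by
    rw [sign_node]
    simp only [List.map_cons, List.map_nil, allTree_toSymbol, List.prod_cons, List.prod_nil,
      allTree_sign, mul_one]
    have h := allTree_sign G w
    simp only [compG] at h
    rw [h]
    cases w <;> simp [allTree, A0]
  refine Eq.trans (congrArg (· + _) (finsum_mem_image hinj)) ?_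
  have hcong : ∀ u ∈ G.parseTreesOf w,
      (PTree.node (none : (compG G).N) [lift G u]).sign (compG G).sign
        = -(u.sign G.sign) := by
    rintro u ⟨⟨-, hroot⟩, -⟩
    rw [sign_node]
    have h1 : (lift G u).toSymbol = .inl (some (.inl G.start)) := by
      rw [lift_toSymbol, hroot]; rfl
    simp only [List.map_cons, List.map_nil, h1, List.prod_cons, List.prod_nil, mul_one,
      lift_sign]
    have h := lift_sign G u
    simp only [compG] at h
    rw [if_pos trivial, h]
    ring
  refine Eq.trans (congrArg (· + _) (finsum_mem_congr rfl hcong)) ?_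
  refine Eq.trans (congrArg (· + _) (finsum_mem_neg_distrib _ (hadm w))) ?_
  beta_reduce
  linarith [hall]

end SGAux

/-- Languages generated by admissible signed grammars are closed under complementation. -/
theorem signed_grammar_closed_under_complement
    (T : Type) [Fintype T] (L : Language T) (G : SignedGrammar T)
    (hG : G.Generates L) :
    ∃ G' : SignedGrammar T, G'.Generates Lᶜ := by
  obtain ⟨hadm, h1, h0⟩ := hG
  refine ⟨SGAux.compG G, ?_, ?_, ?_⟩
  · intro w
    rw [SGAux.parse_char]
    exact (((hadm w).image _).union (Set.finite_singleton _))
  · intro w hw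
    rw [SGAux.compG_count G hadm w, h0 w hw]
    ring
  · intro w hw
    rw [SGAux.compG_count G hadm w, h1 w (not_not.1 hw)]
    ring
end

section
/- The class of languages generated by admissible signed grammars is closed under disjoint union: if L₁, L₂ ⊆ Σ* are each generated by an admissible signed grammar over Σ and L₁ ∩ L₂ = ∅, then L₁ ∪ L₂ is generated by an admissible signed grammar over Σ. -/
namespace SGUnion

open PTree

variable {T N₁ N₂ : Type}

/-- Custom induction principle for `PTree`. -/
theorem PTree.inductionOn {motive : PTree N₁ T → Prop}
    (t : PTree N₁ T)
    (hleaf : ∀ a, motive (.leaf a))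
    (hnode : ∀ A cs, (∀ c ∈ cs, motive c) → motive (.node A cs)) : motive t := by
  match t with
  | .leaf a => exact hleaf a
  | .node A cs =>
    exact hnode A cs (fun c hc => PTree.inductionOn c hleaf hnode)
decreasing_by
  simp only [_root_.PTree.node.sizeOf_spec]
  have h := List.sizeOf_lt_of_mem hc
  omega

def mapSym (f : N₁ → N₂) : N₁ ⊕ T → N₂ ⊕ T := Sum.map f id

lemma mapSym_injective {f : N₁ → N₂} (hf : Function.Injective f) :
    Function.Injective (mapSym f (T := T)) := by
  intro x y h
  cases x <;> cases y <;> simp only [mapSym, Sum.map_inl, Sum.map_inr, id_eq] at h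
  · exact congrArg Sum.inl (hf (Sum.inl.inj h))
  · cases h
  · cases h
  · exact congrArg Sum.inr (Sum.inr.inj h)

def mapTree (f : N₁ → N₂) : PTree N₁ T → PTree N₂ T
  | .leaf a => .leaf a
  | .node A cs => .node (f A) (cs.attach.map fun c => mapTree f c.1)
decreasing_by simp only [_root_.PTree.node.sizeOf_spec]; have h := List.sizeOf_lt_of_mem c.2; omega

lemma attach_map_eq {α β : Type*} (l : List α) (g : α → β) :
    l.attach.map (fun c => g c.1) = l.map g := by
  exact List.attach_map_val

@[simp] lemma mapTree_leaf (f : N₁ → N₂) (a : T) : mapTree f (.leaf a) = .leaf a := by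
  rw [mapTree]

@[simp] lemma mapTree_node (f : N₁ → N₂) (A : N₁) (cs : List (PTree N₁ T)) :
    mapTree f (.node A cs) = .node (f A) (cs.map (mapTree f)) := by
  rw [mapTree, attach_map_eq]

@[simp] lemma yield_leaf (a : T) : (PTree.leaf (N := N₁) a).yield = [a] := by rw [PTree.yield]

@[simp] lemma yield_node (A : N₁) (cs : List (PTree N₁ T)) :
    (PTree.node A cs).yield = cs.flatMap PTree.yield := by
  rw [PTree.yield]
  rw [show cs.attach.flatMap (fun c => PTree.yield c.1) = (cs.attach.map (fun c => PTree.yield c.1)).flatten from (List.flatMap_def ..)]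
  rw [attach_map_eq, ← List.flatMap_def]

@[simp] lemma sign_leaf (σ : N₁ × List (N₁ ⊕ T) → ℤ) (a : T) :
    (PTree.leaf (N := N₁) a).sign σ = 1 := by rw [PTree.sign]

@[simp] lemma sign_node (σ : N₁ × List (N₁ ⊕ T) → ℤ) (A : N₁) (cs : List (PTree N₁ T)) :
    (PTree.node A cs).sign σ = σ (A, cs.map toSymbol) * (cs.map (PTree.sign σ)).prod := by
  rw [PTree.sign, attach_map_eq]

lemma toSymbol_mapTree (f : N₁ → N₂) (t : PTree N₁ T) :
    (mapTree f t).toSymbol = mapSym f t.toSymbol := by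
  cases t <;> simp [toSymbol, mapSym]

lemma yield_mapTree (f : N₁ → N₂) (t : PTree N₁ T) :
    (mapTree f t).yield = t.yield := by
  induction t using PTree.inductionOn with
  | hleaf a => simp
  | hnode A cs ih =>
    simp only [mapTree_node, yield_node, List.flatMap_map]
    exact List.flatMap_congr (fun c hc => ih c hc)

lemma sign_mapTree {f : N₁ → N₂} {σ₁ : N₁ × List (N₁ ⊕ T) → ℤ}
    {σ₂ : N₂ × List (N₂ ⊕ T) → ℤ}
    (hσ : ∀ A α, σ₂ (f A, α.map (mapSym f)) = σ₁ (A, α)) (t : PTree N₁ T) :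
    (mapTree f t).sign σ₂ = t.sign σ₁ := by
  induction t using PTree.inductionOn with
  | hleaf a => simp
  | hnode A cs ih =>
    simp only [mapTree_node, sign_node, List.map_map]
    have h1 : cs.map (toSymbol ∘ mapTree f) = (cs.map toSymbol).map (mapSym f) := by
      simp only [List.map_map]
      exact List.map_congr_left (fun c _ => toSymbol_mapTree f c)
    have h2 : cs.map (PTree.sign σ₂ ∘ mapTree f) = cs.map (PTree.sign σ₁) :=
      List.map_congr_left (fun c hc => ih c hc)
    rw [h1, h2, hσ]

lemma valid_mapTree {f : N₁ → N₂} {R₁ : Set (N₁ × List (N₁ ⊕ T))}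
    {R₂ : Set (N₂ × List (N₂ ⊕ T))}
    (hR : ∀ A α, (A, α) ∈ R₁ → (f A, α.map (mapSym f)) ∈ R₂)
    {t : PTree N₁ T} (ht : PTree.Valid R₁ t) : PTree.Valid R₂ (mapTree f t) := by
  induction ht with
  | leaf a => simp only [mapTree_leaf]; exact PTree.Valid.leaf a
  | node A cs hmem hcs ih =>
    rw [mapTree_node]
    refine PTree.Valid.node _ _ ?_ ?_
    · have : (cs.map (mapTree f)).map toSymbol = (cs.map toSymbol).map (mapSym f) := by
        simp only [List.map_map]
        exact List.map_congr_left (fun c _ => toSymbol_mapTree f c)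
      rw [this]; exact hR A _ hmem
    · intro c hc
      obtain ⟨c', hc', rfl⟩ := List.mem_map.mp hc
      exact ih c' hc'

lemma list_map_injOn {α β : Type*} {g : α → β} :
    ∀ (cs cs' : List α), (∀ c ∈ cs, ∀ c', g c = g c' → c = c') →
      cs.map g = cs'.map g → cs = cs'
  | [], [], _, _ => rfl
  | [], _ :: _, _, h => by simp at h
  | _ :: _, [], _, h => by simp at h
  | a :: cs, a' :: cs', hinj, h => by
    simp only [List.map_cons, List.cons.injEq] at h
    have h1 := hinj a (by simp) a' h.1
    have h2 := list_map_injOn cs cs' (fun c hc c' => hinj c (by simp [hc]) c') h.2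
    rw [h1, h2]

lemma mapTree_injective {f : N₁ → N₂} (hf : Function.Injective f) :
    Function.Injective (mapTree f (T := T)) := by
  intro t
  induction t using PTree.inductionOn with
  | hleaf a => intro t' h; cases t' <;> simp at h <;> simp [h]
  | hnode A cs ih =>
    intro t' h
    cases t' with
    | leaf b => simp at h
    | node A' cs' =>
      simp only [mapTree_node, PTree.node.injEq] at h
      have := list_map_injOn cs cs' ih h.2
      rw [hf h.1, this]

lemma exists_preimage_list {f : N₁ → N₂} {R₁ : Set (N₁ × List (N₁ ⊕ T))} :
    ∀ (cs : List (PTree N₂ T)),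
      (∀ c ∈ cs, ∃ t, PTree.Valid R₁ t ∧ mapTree f t = c) →
      ∃ ts : List (PTree N₁ T), (∀ t ∈ ts, PTree.Valid R₁ t) ∧ ts.map (mapTree f) = cs
  | [], _ => ⟨[], by simp, rfl⟩
  | c :: cs, h => by
    obtain ⟨t, ht, rfl⟩ := h c (by simp)
    obtain ⟨ts, hts, rfl⟩ := exists_preimage_list cs (fun c hc => h c (by simp [hc]))
    refine ⟨t :: ts, ?_, rfl⟩
    intro t' ht'
    rcases List.mem_cons.mp ht' with rfl | h'
    · exact ht
    · exact hts _ h'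

lemma mapTree_surjOn {f : N₁ → N₂} (hf : Function.Injective f)
    {R₁ : Set (N₁ × List (N₁ ⊕ T))} {R₂ : Set (N₂ × List (N₂ ⊕ T))}
    (hR : ∀ (A : N₁) (β), (f A, β) ∈ R₂ → ∃ α, (A, α) ∈ R₁ ∧ β = α.map (mapSym f)) :
    ∀ u : PTree N₂ T, PTree.Valid R₂ u → (∃ s, u.toSymbol = mapSym f s) →
      ∃ t : PTree N₁ T, PTree.Valid R₁ t ∧ mapTree f t = u := by
  intro u
  induction u using PTree.inductionOn with
  | hleaf a => intro _ _; exact ⟨.leaf a, PTree.Valid.leaf a, by simp⟩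
  | hnode B cs ihc =>
    rintro hv ⟨s, hs⟩
    cases s with
    | inr a => simp [toSymbol, mapSym] at hs
    | inl A =>
      simp only [toSymbol, mapSym, Sum.map_inl, Sum.inl.injEq] at hs
      subst hs
      rcases hv with _ | ⟨_, _, hmem, hvalid⟩
      obtain ⟨α, hα, hαeq⟩ := hR A _ hmem
      have hsym : ∀ c ∈ cs, ∃ s, c.toSymbol = mapSym f s := by
        intro c hc
        have : c.toSymbol ∈ α.map (mapSym f) := by
          rw [← hαeq]; exact List.mem_map_of_mem (f := toSymbol) hc
        obtain ⟨s, _, hs⟩ := List.mem_map.mp this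
        exact ⟨s, hs.symm⟩
      obtain ⟨ts, hts, rfl⟩ := exists_preimage_list cs
        (fun c hc => ihc c hc (hvalid c hc) (hsym c hc))
      refine ⟨.node A ts, ?_, by rw [mapTree_node]⟩
      refine PTree.Valid.node A ts ?_ hts
      have heq : (ts.map (mapTree f)).map toSymbol = (ts.map toSymbol).map (mapSym f) := by
        simp only [List.map_map]
        exact List.map_congr_left (fun c _ => toSymbol_mapTree f c)
      rw [heq] at hαeq
      have : α = ts.map toSymbol :=
        (List.map_injective_iff.mpr (mapSym_injective hf)) hαeq.symm
      rwa [← this]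

end SGUnion
namespace SGUnion

variable {T : Type} (G₁ G₂ : SignedGrammar T)

def inj₁ : G₁.N → Option (G₁.N ⊕ G₂.N) := fun A => some (Sum.inl A)
def inj₂ : G₂.N → Option (G₁.N ⊕ G₂.N) := fun A => some (Sum.inr A)

lemma inj₁_injective : Function.Injective (inj₁ G₁ G₂) := by
  intro a b h; simpa [inj₁] using h

lemma inj₂_injective : Function.Injective (inj₂ G₁ G₂) := by
  intro a b h; simpa [inj₂] using h

open Classical in
noncomputable def uSign : (Option (G₁.N ⊕ G₂.N)) × List ((Option (G₁.N ⊕ G₂.N)) ⊕ T) → ℤ :=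
  fun p =>
  match p with
  | (none, _) => 1
  | (some (Sum.inl A), β) =>
      if h : ∃ α, β = α.map (mapSym (inj₁ G₁ G₂)) then G₁.sign (A, h.choose) else 1
  | (some (Sum.inr A), β) =>
      if h : ∃ α, β = α.map (mapSym (inj₂ G₁ G₂)) then G₂.sign (A, h.choose) else 1

lemma uSign_none (β) : uSign G₁ G₂ (none, β) = 1 := rfl

open Classical in
lemma uSign_inj₁ (A : G₁.N) (α : List (G₁.N ⊕ T)) :
    uSign G₁ G₂ (inj₁ G₁ G₂ A, α.map (mapSym (inj₁ G₁ G₂))) = G₁.sign (A, α) := by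
  have h : ∃ α' : List (G₁.N ⊕ T), α.map (mapSym (inj₁ G₁ G₂)) = α'.map (mapSym (inj₁ G₁ G₂)) := ⟨α, rfl⟩
  show (if h : ∃ α' : List (G₁.N ⊕ T), α.map (mapSym (inj₁ G₁ G₂)) = α'.map (mapSym (inj₁ G₁ G₂)) then
      G₁.sign (A, h.choose) else 1) = G₁.sign (A, α)
  rw [dif_pos h]
  have heq : h.choose = α :=
    (List.map_injective_iff.mpr (mapSym_injective (inj₁_injective G₁ G₂))) h.choose_spec.symm
  rw [heq]

open Classical in
lemma uSign_inj₂ (A : G₂.N) (α : List (G₂.N ⊕ T)) :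
    uSign G₁ G₂ (inj₂ G₁ G₂ A, α.map (mapSym (inj₂ G₁ G₂))) = G₂.sign (A, α) := by
  have h : ∃ α' : List (G₂.N ⊕ T), α.map (mapSym (inj₂ G₁ G₂)) = α'.map (mapSym (inj₂ G₁ G₂)) := ⟨α, rfl⟩
  show (if h : ∃ α' : List (G₂.N ⊕ T), α.map (mapSym (inj₂ G₁ G₂)) = α'.map (mapSym (inj₂ G₁ G₂)) then
      G₂.sign (A, h.choose) else 1) = G₂.sign (A, α)
  rw [dif_pos h]
  have heq : h.choose = α :=
    (List.map_injective_iff.mpr (mapSym_injective (inj₂_injective G₁ G₂))) h.choose_spec.symm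
  rw [heq]

def uRules : Set ((Option (G₁.N ⊕ G₂.N)) × List ((Option (G₁.N ⊕ G₂.N)) ⊕ T)) :=
  ({(none, [Sum.inl (inj₁ G₁ G₂ G₁.start)]), (none, [Sum.inl (inj₂ G₁ G₂ G₂.start)])} :
      Set _) ∪
  (fun r => (inj₁ G₁ G₂ r.1, r.2.map (mapSym (inj₁ G₁ G₂)))) '' G₁.rules ∪
  (fun r => (inj₂ G₁ G₂ r.1, r.2.map (mapSym (inj₂ G₁ G₂)))) '' G₂.rules

noncomputable def uG : SignedGrammar T where
  N := Option (G₁.N ⊕ G₂.N)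
  finN := by
    haveI := G₁.finN; haveI := G₂.finN
    exact Finite.of_equiv _ (Equiv.optionEquivSumPUnit.{0,0} (G₁.N ⊕ G₂.N)).symm
  start := none
  rules := uRules G₁ G₂
  finRules := by
    refine Set.Finite.union (Set.Finite.union ?_ ?_) ?_
    · exact (Set.finite_singleton _).insert _
    · exact G₁.finRules.image _
    · exact G₂.finRules.image _
  sign := uSign G₁ G₂
  sign_valid := by
    rintro r (((rfl | rfl) | ⟨⟨A, α⟩, hr, rfl⟩) | ⟨⟨A, α⟩, hr, rfl⟩)
    · left; rfl
    · left; rfl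
    · rw [uSign_inj₁]; exact G₁.sign_valid _ hr
    · rw [uSign_inj₂]; exact G₂.sign_valid _ hr

lemma map_eq_singleton {α β : Type*} {g : α → β} {l : List α} {b : β}
    (h : l.map g = [b]) : ∃ a, l = [a] ∧ g a = b := by
  cases l with
  | nil => simp at h
  | cons x xs =>
    cases xs with
    | nil => simp only [List.map_cons, List.map_nil, List.cons.injEq, and_true] at h
             exact ⟨x, rfl, h⟩
    | cons y ys => simp at h

def wrap₁ (t : PTree G₁.N T) : PTree (Option (G₁.N ⊕ G₂.N)) T :=
  .node none [mapTree (inj₁ G₁ G₂) t]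

def wrap₂ (t : PTree G₂.N T) : PTree (Option (G₁.N ⊕ G₂.N)) T :=
  .node none [mapTree (inj₂ G₁ G₂) t]

lemma parseTreesOf_uG (w : List T) :
    (uG G₁ G₂).parseTreesOf w =
      wrap₁ G₁ G₂ '' G₁.parseTreesOf w ∪ wrap₂ G₁ G₂ '' G₂.parseTreesOf w := by
  ext u
  constructor
  · rintro ⟨⟨hv, hs⟩, hy⟩
    cases u with
    | leaf a => simp [PTree.toSymbol, uG] at hs
    | node B cs =>
      have hB : B = none := Sum.inl.inj hs
      subst hB
      rcases hv with _ | ⟨_, _, hmem, hvalid⟩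
      rcases hmem with ((heq | heq) | ⟨⟨A, α⟩, _, heq⟩) | ⟨⟨A, α⟩, _, heq⟩
      · -- start rule for G₁
        have hcs0 : cs.map PTree.toSymbol = [Sum.inl (inj₁ G₁ G₂ G₁.start)] :=
          congrArg Prod.snd heq
        obtain ⟨c, rfl, hcs⟩ := map_eq_singleton hcs0
        · obtain ⟨t, ht, rfl⟩ := mapTree_surjOn (inj₁_injective G₁ G₂)
            (R₁ := G₁.rules) (fun A β hb => by
              rcases hb with ((hb | hb) | ⟨⟨A', α'⟩, hm, hb⟩) | ⟨⟨A', α'⟩, hm, hb⟩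
              · exact absurd (congrArg Prod.fst hb) (by simp [inj₁])
              · exact absurd (congrArg Prod.fst hb) (by simp [inj₁])
              · have h1 : A' = A := inj₁_injective G₁ G₂ (congrArg Prod.fst hb)
                subst h1
                exact ⟨α', hm, (congrArg Prod.snd hb).symm⟩
              · exact absurd (congrArg Prod.fst hb) (by simp [inj₁, inj₂]))
            c (hvalid c (by simp)) ⟨Sum.inl G₁.start, by exact hcs⟩
          left
          refine ⟨t, ⟨⟨ht, ?_⟩, ?_⟩, rfl⟩
          · have := hcs
            replace this := (toSymbol_mapTree (inj₁ G₁ G₂) t).symm.trans this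
            have h2 : mapSym (inj₁ G₁ G₂) t.toSymbol =
                mapSym (inj₁ G₁ G₂) (Sum.inl G₁.start) := by
              simpa [mapSym] using this
            have := mapSym_injective (inj₁_injective G₁ G₂) h2
            simpa using this
          · rw [← hy]
            exact ((yield_node (N₁ := Option (G₁.N ⊕ G₂.N)) none [mapTree (inj₁ G₁ G₂) t]).trans (show [mapTree (inj₁ G₁ G₂) t].flatMap PTree.yield = t.yield by simp [yield_mapTree])).symm
      · -- start rule for G₂
        have hcs0 : cs.map PTree.toSymbol = [Sum.inl (inj₂ G₁ G₂ G₂.start)] :=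
          congrArg Prod.snd heq
        obtain ⟨c, rfl, hcs⟩ := map_eq_singleton hcs0
        · obtain ⟨t, ht, rfl⟩ := mapTree_surjOn (inj₂_injective G₁ G₂)
            (R₁ := G₂.rules) (fun A β hb => by
              rcases hb with ((hb | hb) | ⟨⟨A', α'⟩, hm, hb⟩) | ⟨⟨A', α'⟩, hm, hb⟩
              · exact absurd (congrArg Prod.fst hb) (by simp [inj₂])
              · exact absurd (congrArg Prod.fst hb) (by simp [inj₂])
              · exact absurd (congrArg Prod.fst hb) (by simp [inj₁, inj₂])
              · have h1 : A' = A := inj₂_injective G₁ G₂ (congrArg Prod.fst hb)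
                subst h1
                exact ⟨α', hm, (congrArg Prod.snd hb).symm⟩)
            c (hvalid c (by simp)) ⟨Sum.inl G₂.start, by exact hcs⟩
          right
          refine ⟨t, ⟨⟨ht, ?_⟩, ?_⟩, rfl⟩
          · have := hcs
            replace this := (toSymbol_mapTree (inj₂ G₁ G₂) t).symm.trans this
            have h2 : mapSym (inj₂ G₁ G₂) t.toSymbol =
                mapSym (inj₂ G₁ G₂) (Sum.inl G₂.start) := by
              simpa [mapSym] using this
            have := mapSym_injective (inj₂_injective G₁ G₂) h2
            simpa using this
          · rw [← hy]
            exact ((yield_node (N₁ := Option (G₁.N ⊕ G₂.N)) none [mapTree (inj₂ G₁ G₂) t]).trans (show [mapTree (inj₂ G₁ G₂) t].flatMap PTree.yield = t.yield by simp [yield_mapTree])).symm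
      · exact absurd (congrArg Prod.fst heq) (by simp [inj₁])
      · exact absurd (congrArg Prod.fst heq) (by simp [inj₂])
  · rintro (⟨t, ⟨⟨hv, hs⟩, hy⟩, rfl⟩ | ⟨t, ⟨⟨hv, hs⟩, hy⟩, rfl⟩)
    · refine ⟨⟨?_, rfl⟩, ?_⟩
      · refine PTree.Valid.node none [mapTree (inj₁ G₁ G₂) t] ?_ ?_
        · have : [(mapTree (inj₁ G₁ G₂) t).toSymbol] = [Sum.inl (inj₁ G₁ G₂ G₁.start)] := by
            rw [toSymbol_mapTree, hs]; rfl
          simp only [List.map_cons, List.map_nil, this]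
          exact Or.inl (Or.inl (Or.inl rfl))
        · rintro c hc
          rcases List.mem_singleton.mp hc with rfl
          exact valid_mapTree (fun A α hr => Or.inl (Or.inr ⟨(A, α), hr, rfl⟩)) hv
      · rw [← hy]; exact (yield_node (N₁ := Option (G₁.N ⊕ G₂.N)) none _).trans (by simp [yield_mapTree])
    · refine ⟨⟨?_, rfl⟩, ?_⟩
      · refine PTree.Valid.node none [mapTree (inj₂ G₁ G₂) t] ?_ ?_
        · have : [(mapTree (inj₂ G₁ G₂) t).toSymbol] = [Sum.inl (inj₂ G₁ G₂ G₂.start)] := by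
            rw [toSymbol_mapTree, hs]; rfl
          simp only [List.map_cons, List.map_nil, this]
          exact Or.inl (Or.inl (Or.inr rfl))
        · rintro c hc
          rcases List.mem_singleton.mp hc with rfl
          exact valid_mapTree (fun A α hr => Or.inr ⟨(A, α), hr, rfl⟩) hv
      · rw [← hy]; exact (yield_node (N₁ := Option (G₁.N ⊕ G₂.N)) none _).trans (by simp [yield_mapTree])

lemma wrap₁_injective : Function.Injective (wrap₁ G₁ G₂) := by
  intro a b h
  simp only [wrap₁, PTree.node.injEq, List.cons.injEq, and_true, true_and] at h
  exact mapTree_injective (inj₁_injective G₁ G₂) h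

lemma wrap₂_injective : Function.Injective (wrap₂ G₁ G₂) := by
  intro a b h
  simp only [wrap₂, PTree.node.injEq, List.cons.injEq, and_true, true_and] at h
  exact mapTree_injective (inj₂_injective G₁ G₂) h

lemma sign_wrap₁ (t : PTree G₁.N T) :
    (wrap₁ G₁ G₂ t).sign (uG G₁ G₂).sign = t.sign G₁.sign := by
  show (PTree.node none [mapTree (inj₁ G₁ G₂) t]).sign (uSign G₁ G₂) = _
  rw [sign_node]
  simp only [List.map_cons, List.map_nil, List.prod_cons, List.prod_nil, mul_one]
  rw [uSign_none, one_mul]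
  exact sign_mapTree (uSign_inj₁ G₁ G₂) t

lemma sign_wrap₂ (t : PTree G₂.N T) :
    (wrap₂ G₁ G₂ t).sign (uG G₁ G₂).sign = t.sign G₂.sign := by
  show (PTree.node none [mapTree (inj₂ G₁ G₂) t]).sign (uSign G₁ G₂) = _
  rw [sign_node]
  simp only [List.map_cons, List.map_nil, List.prod_cons, List.prod_nil, mul_one]
  rw [uSign_none, one_mul]
  exact sign_mapTree (uSign_inj₂ G₁ G₂) t

lemma wrap_disjoint (w : List T) :
    Disjoint (wrap₁ G₁ G₂ '' G₁.parseTreesOf w) (wrap₂ G₁ G₂ '' G₂.parseTreesOf w) := by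
  rw [Set.disjoint_left]
  rintro u ⟨t₁, ⟨⟨_, hs₁⟩, _⟩, rfl⟩ ⟨t₂, ⟨⟨_, hs₂⟩, _⟩, heq⟩
  simp only [wrap₁, wrap₂, PTree.node.injEq, List.cons.injEq, and_true, true_and] at heq
  have h1 := congrArg PTree.toSymbol heq
  rw [toSymbol_mapTree, toSymbol_mapTree, hs₁, hs₂] at h1
  simp [mapSym, inj₁, inj₂] at h1

lemma count_uG (hadm₁ : G₁.Admissible) (hadm₂ : G₂.Admissible) (w : List T) :
    (uG G₁ G₂).count w = G₁.count w + G₂.count w := by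
  have key : (∑ᶠ t ∈ (wrap₁ G₁ G₂ '' G₁.parseTreesOf w ∪ wrap₂ G₁ G₂ '' G₂.parseTreesOf w),
      PTree.sign (uG G₁ G₂).sign t) = G₁.count w + G₂.count w := by
    show (∑ᶠ t ∈ _, PTree.sign (uSign G₁ G₂) t) = _
    rw [finsum_mem_union (wrap_disjoint G₁ G₂ w) ((hadm₁ w).image _) ((hadm₂ w).image _),
        finsum_mem_image ((wrap₁_injective G₁ G₂).injOn),
        finsum_mem_image ((wrap₂_injective G₁ G₂).injOn)]
    unfold SignedGrammar.count
    congr 1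
    · exact finsum_mem_congr rfl (fun t _ => sign_wrap₁ G₁ G₂ t)
    · exact finsum_mem_congr rfl (fun t _ => sign_wrap₂ G₁ G₂ t)
  unfold SignedGrammar.count
  rw [parseTreesOf_uG]
  exact key

end SGUnion

/-- Languages generated by admissible signed grammars are closed under disjoint union. -/
theorem signed_grammar_closed_under_disjoint_union
    (T : Type) [Fintype T] (L₁ L₂ : Language T)
    (G₁ G₂ : SignedGrammar T) (h₁ : G₁.Generates L₁) (h₂ : G₂.Generates L₂)
    (hdisj : L₁ ⊓ L₂ = ⊥) :
    ∃ G : SignedGrammar T, G.Generates (L₁ ⊔ L₂) := by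
  obtain ⟨hadm₁, hin₁, hout₁⟩ := h₁
  obtain ⟨hadm₂, hin₂, hout₂⟩ := h₂
  have hd : ∀ w : List T, w ∈ L₁ → w ∉ L₂ := by
    intro w hw1 hw2
    have : w ∈ (L₁ ⊓ L₂ : Language T) := ⟨hw1, hw2⟩
    rw [hdisj] at this
    exact this
  refine ⟨SGUnion.uG G₁ G₂, ?_, ?_, ?_⟩
  · intro w
    rw [SGUnion.parseTreesOf_uG]
    exact ((hadm₁ w).image _).union ((hadm₂ w).image _)
  · intro w hw
    rw [SGUnion.count_uG G₁ G₂ hadm₁ hadm₂]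
    rcases (show w ∈ L₁ ∨ w ∈ L₂ from hw) with hw | hw
    · rw [hin₁ w hw, hout₂ w (hd w hw)]; ring
    · have hw1 : w ∉ L₁ := fun h => hd w h hw
      rw [hout₁ w hw1, hin₂ w hw]
      ring
  · intro w hw
    have hw1 : w ∉ L₁ := fun h => hw (Or.inl h)
    have hw2 : w ∉ L₂ := fun h => hw (Or.inr h)
    rw [SGUnion.count_uG G₁ G₂ hadm₁ hadm₂, hout₁ w hw1, hout₂ w hw2]
    ring
end

section
/- The class of languages generated by admissible signed grammars is closed under subset difference: if L₁, L₂ ⊆ Σ* are each generated by an admissible signed grammar over Σ and L₁ ⊆ L₂, then L₂ \ L₁ is generated by an admissible signed grammar over Σ. -/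
namespace PTree

variable {N T : Type}

-- helpers
theorem yield_leaf (t : T) : yield (leaf t : PTree N T) = [t] := by rw [yield]

theorem yield_node (A : N) (cs : List (PTree N T)) :
    yield (node A cs) = cs.flatMap yield := by
  rw [yield, List.flatMap_def, List.flatMap_def, List.attach_map_val]

theorem sign_leaf (σ : N × List (N ⊕ T) → ℤ) (t : T) : sign σ (leaf t : PTree N T) = 1 := by
  rw [sign]

theorem sign_node (σ : N × List (N ⊕ T) → ℤ) (A : N) (cs : List (PTree N T)) :
    sign σ (node A cs) = σ (A, cs.map toSymbol) * (cs.map (sign σ)).prod := by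
  rw [sign, List.attach_map_val]

def mapN (f : N → N') : PTree N T → PTree N' T
  | leaf t => leaf t
  | node A cs => node (f A) (cs.attach.map fun c => mapN f c.1)
decreasing_by simp only [PTree.node.sizeOf_spec]; have h := List.sizeOf_lt_of_mem c.2; omega

theorem mapN_leaf (f : N → N') (t : T) : mapN f (leaf t : PTree N T) = leaf t := by rw [mapN]

theorem mapN_node (f : N → N') (A : N) (cs : List (PTree N T)) :
    mapN f (node A cs) = node (f A) (cs.map (mapN f)) := by
  rw [mapN, List.attach_map_val]

theorem ind {motive : PTree N T → Prop}
    (hleaf : ∀ t, motive (leaf t))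
    (hnode : ∀ A cs, (∀ c ∈ cs, motive c) → motive (node A cs)) :
    ∀ t, motive t
  | leaf t => hleaf t
  | node A cs => hnode A cs (fun c hc => ind hleaf hnode c)
decreasing_by have h := List.sizeOf_lt_of_mem hc; simp only [PTree.node.sizeOf_spec]; omega

theorem toSymbol_mapN (f : N → N') (t : PTree N T) :
    (mapN f t).toSymbol = Sum.map f id t.toSymbol := by
  cases t with
  | leaf t => rw [mapN_leaf]; rfl
  | node A cs => rw [mapN_node]; rfl

theorem yield_mapN (f : N → N') (t : PTree N T) : (mapN f t).yield = t.yield := by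
  induction t using ind with
  | hleaf t => rw [mapN_leaf, yield_leaf, yield_leaf]
  | hnode A cs ih =>
    rw [mapN_node, yield_node, yield_node, List.flatMap_map]
    exact List.flatMap_congr (by intro c hc; exact ih c hc)



theorem eq_leaf_of_toSymbol (t : PTree N T) (a : T) (h : t.toSymbol = Sum.inr a) :
    t = leaf a := by
  cases t with
  | leaf b => cases h; rfl
  | node A cs => exact absurd h (by simp [toSymbol])

theorem sign_mapN (f : N → N') (σ : N × List (N ⊕ T) → ℤ) (σ' : N' × List (N' ⊕ T) → ℤ)
    (hσ : ∀ A β, σ' (f A, β.map (Sum.map f id)) = σ (A, β)) (t : PTree N T) :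
    sign σ' (mapN f t) = sign σ t := by
  induction t using ind with
  | hleaf t => rw [mapN_leaf, sign_leaf, sign_leaf]
  | hnode A cs ih =>
    rw [mapN_node, sign_node, sign_node]
    have h1 : (cs.map (mapN f)).map toSymbol = (cs.map toSymbol).map (Sum.map f id) := by
      rw [List.map_map, List.map_map]
      exact List.map_congr_left (fun c _ => toSymbol_mapN f c)
    rw [h1, hσ]
    congr 1
    rw [List.map_map]
    exact congrArg List.prod (List.map_congr_left (fun c hc => ih c hc))

theorem mapN_mapN {N'' : Type} (f : N → N') (g : N' → N'') (t : PTree N T) :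
    mapN g (mapN f t) = mapN (g ∘ f) t := by
  induction t using ind with
  | hleaf t => rw [mapN_leaf, mapN_leaf, mapN_leaf]
  | hnode A cs ih =>
    rw [mapN_node, mapN_node, mapN_node, List.map_map]
    exact congrArg _ (List.map_congr_left (fun c hc => ih c hc))

theorem mapN_id (t : PTree N T) : mapN id t = t := by
  induction t using ind with
  | hleaf t => rw [mapN_leaf]
  | hnode A cs ih =>
    rw [mapN_node]
    simp only [id]
    exact congrArg _ ((List.map_congr_left (fun c hc => ih c hc)).trans (List.map_id cs))

theorem mapN_injective (f : N → N') (g : N' → N) (hg : ∀ x, g (f x) = x) :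
    Function.Injective (mapN (T := T) f) := by
  intro t₁ t₂ h
  have := congrArg (mapN g) h
  rw [mapN_mapN, mapN_mapN] at this
  have hgf : g ∘ f = id := funext hg
  rwa [hgf, mapN_id, mapN_id] at this

theorem valid_mapN (f : N → N') (R : Set (N × List (N ⊕ T))) (R' : Set (N' × List (N' ⊕ T)))
    (hR : ∀ A β, (A, β) ∈ R → (f A, β.map (Sum.map f id)) ∈ R') (t : PTree N T)
    (ht : Valid R t) : Valid R' (mapN f t) := by
  induction t using ind with
  | hleaf t => rw [mapN_leaf]; exact Valid.leaf t
  | hnode A cs ih =>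
    rw [mapN_node]
    cases ht with
    | node _ _ hr hall =>
      refine Valid.node _ _ ?_ ?_
      · have h1 : (cs.map (mapN f)).map toSymbol = (cs.map toSymbol).map (Sum.map f id) := by
          rw [List.map_map, List.map_map]
          exact List.map_congr_left (fun c _ => toSymbol_mapN f c)
        rw [h1]; exact hR A _ hr
      · intro c hc
        obtain ⟨d, hd, rfl⟩ := List.mem_map.1 hc
        exact ih d hd (hall d hd)

/-- Surjectivity: every valid tree over `R'` whose root is in the range of `f`
is the image of a valid tree over `R`. -/
theorem exists_preimage (f : N → N') (hf : Function.Injective f)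
    (R : Set (N × List (N ⊕ T))) (R' : Set (N' × List (N' ⊕ T)))
    (hR : ∀ A β', (f A, β') ∈ R' → ∃ β, β' = β.map (Sum.map f id) ∧ (A, β) ∈ R) :
    ∀ t' : PTree N' T, Valid R' t' → ∀ A, t'.toSymbol = Sum.inl (f A) →
      ∃ t : PTree N T, Valid R t ∧ mapN f t = t'
  | leaf t, _, A, h => by exact absurd h (by simp [toSymbol])
  | node A' cs, hv, A, h => by
    have hA : A' = f A := by simpa [toSymbol] using h
    subst hA
    have hr : (f A, cs.map toSymbol) ∈ R' := by cases hv with | node _ _ hr _ => exact hr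
    have hall : ∀ c ∈ cs, Valid R' c := by cases hv with | node _ _ _ hall => exact hall
    obtain ⟨β, hβ, hrR⟩ := hR A _ hr
    -- build preimages of children
    have hkey : ∀ c ∈ cs, ∃ d : PTree N T, Valid R d ∧ mapN f d = c := by
      intro c hc
      cases hcs : c.toSymbol with
      | inr a =>
        exact ⟨leaf a, Valid.leaf a, by rw [eq_leaf_of_toSymbol c a hcs, mapN_leaf]⟩
      | inl B' =>
        -- B' is in the range of f
        have hmem : Sum.inl B' ∈ (cs.map toSymbol : List (N' ⊕ T)) :=
          hcs ▸ List.mem_map_of_mem (f := toSymbol) hc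
        rw [hβ] at hmem
        obtain ⟨x, _, hx⟩ := List.mem_map.1 hmem
        cases x with
        | inr a => exact absurd hx (by simp [Sum.map])
        | inl B =>
          have hB : B' = f B := by simpa [Sum.map] using hx.symm
          exact exists_preimage f hf R R' hR c (hall c hc) B (hB ▸ hcs)
    choose pre hpre using hkey
    refine ⟨node A (cs.attach.map fun c => pre c.1 c.2), ?_, ?_⟩
    · refine Valid.node _ _ ?_ ?_
      · have he : (cs.attach.map fun c => pre c.1 c.2).map toSymbol = β := by
          apply List.map_injective_iff.2 (Sum.map_injective.2 ⟨hf, Function.injective_id⟩)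
          rw [← hβ, List.map_map, List.map_map]
          refine (List.map_congr_left ?_).trans (List.attach_map_val (l := cs) (f := toSymbol))
          intro c _
          simp only [Function.comp]
          rw [← toSymbol_mapN, (hpre c.1 c.2).2]
        rw [he]; exact hrR
      · intro d hd
        obtain ⟨c, _, rfl⟩ := List.mem_map.1 hd
        exact (hpre c.1 c.2).1
    · rw [mapN_node, List.map_map]
      exact congrArg _ ((List.map_congr_left (fun c _ => (hpre c.1 c.2).2)).trans
        (List.attach_map_subtype_val cs))
decreasing_by have h := List.sizeOf_lt_of_mem hc; simp only [PTree.node.sizeOf_spec]; omega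

end PTree

section Diff

variable {T N₁ N₂ : Type}

/-- Embedding of the first grammar's nonterminals. -/
def df₁ : N₁ → Option (N₁ ⊕ N₂) := fun B => some (Sum.inl B)
def df₂ : N₂ → Option (N₁ ⊕ N₂) := fun B => some (Sum.inr B)

def dd₁ : Option (N₁ ⊕ N₂) ⊕ T → Option (N₁ ⊕ T)
  | Sum.inl (some (Sum.inl B)) => some (Sum.inl B)
  | Sum.inr t => some (Sum.inr t)
  | _ => none

def dd₂ : Option (N₁ ⊕ N₂) ⊕ T → Option (N₂ ⊕ T)
  | Sum.inl (some (Sum.inr B)) => some (Sum.inl B)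
  | Sum.inr t => some (Sum.inr t)
  | _ => none

theorem df₁_injective : Function.Injective (df₁ (N₁ := N₁) (N₂ := N₂)) := by
  intro a b h; simpa [df₁] using h

theorem df₂_injective : Function.Injective (df₂ (N₁ := N₁) (N₂ := N₂)) := by
  intro a b h; simpa [df₂] using h

theorem filterMap_dd₁ (β : List (N₁ ⊕ T)) :
    (β.map (Sum.map (df₁ (N₂ := N₂)) id)).filterMap dd₁ = β := by
  rw [List.filterMap_map]
  have : (dd₁ ∘ Sum.map (df₁ (N₁ := N₁) (N₂ := N₂)) (id : T → T)) = some := by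
    funext x; rcases x with B | t <;> rfl
  rw [this, List.filterMap_some]

theorem filterMap_dd₂ (β : List (N₂ ⊕ T)) :
    (β.map (Sum.map (df₂ (N₁ := N₁)) id)).filterMap dd₂ = β := by
  rw [List.filterMap_map]
  have : (dd₂ ∘ Sum.map (df₂ (N₁ := N₁) (N₂ := N₂)) (id : T → T)) = some := by
    funext x; rcases x with B | t <;> rfl
  rw [this, List.filterMap_some]

/-- The set of valid trees over `R'` with root `f start` and given yield is the image of
the parse trees of `G₀`. -/
theorem embed_parseTrees (G₀ : SignedGrammar T) {N' : Type} (f : G₀.N → N')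
    (hf : Function.Injective f) (R' : Set (N' × List (N' ⊕ T)))
    (hfwd : ∀ A β, (A, β) ∈ G₀.rules → (f A, β.map (Sum.map f id)) ∈ R')
    (hbwd : ∀ A β', (f A, β') ∈ R' → ∃ β, β' = β.map (Sum.map f id) ∧ (A, β) ∈ G₀.rules)
    (w : List T) :
    {t' : PTree N' T | PTree.Valid R' t' ∧ t'.toSymbol = Sum.inl (f G₀.start) ∧ t'.yield = w}
      = PTree.mapN f '' (G₀.parseTreesOf w) := by
  ext t'
  constructor
  · rintro ⟨hv, hs, hy⟩
    obtain ⟨t, htv, rfl⟩ := PTree.exists_preimage f hf G₀.rules R' hbwd t' hv G₀.start hs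
    refine ⟨t, ⟨⟨htv, ?_⟩, ?_⟩, rfl⟩
    · rw [PTree.toSymbol_mapN] at hs
      rcases hts : t.toSymbol with B | a
      · rw [hts] at hs; simp only [Sum.map_inl] at hs
        exact congrArg Sum.inl (hf (Sum.inl_injective hs))
      · rw [hts] at hs; simp at hs
    · rwa [PTree.yield_mapN] at hy
  · rintro ⟨t, ⟨⟨htv, hts⟩, hty⟩, rfl⟩
    refine ⟨PTree.valid_mapN f G₀.rules R' hfwd t htv, ?_, ?_⟩
    · rw [PTree.toSymbol_mapN, hts]; rfl
    · rw [PTree.yield_mapN]; exact hty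

end Diff

open scoped Classical in
/-- Languages generated by admissible signed grammars are closed under subset difference. -/
theorem signed_grammar_closed_under_subset_minus
    (T : Type) [Fintype T] (L₁ L₂ : Language T)
    (G₁ G₂ : SignedGrammar T) (h₁ : G₁.Generates L₁) (h₂ : G₂.Generates L₂)
    (hsub : L₁ ≤ L₂) :
    ∃ G : SignedGrammar T, G.Generates (L₂ \ L₁) := by
  classical
  obtain ⟨hadm₁, hin₁, hout₁⟩ := h₁
  obtain ⟨hadm₂, hin₂, hout₂⟩ := h₂
  set M : Type := Option (G₁.N ⊕ G₂.N) with hM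
  set f₁ : G₁.N → M := df₁ with hf₁
  set f₂ : G₂.N → M := df₂ with hf₂
  set st₁ : List (M ⊕ T) := [Sum.inl (f₁ G₁.start)] with hst₁
  set st₂ : List (M ⊕ T) := [Sum.inl (f₂ G₂.start)] with hst₂
  set R : Set (M × List (M ⊕ T)) :=
    ({((none : M), st₁), ((none : M), st₂)} : Set (M × List (M ⊕ T)))
      ∪ (fun r => (f₁ r.1, r.2.map (Sum.map f₁ id))) '' G₁.rules
      ∪ (fun r => (f₂ r.1, r.2.map (Sum.map f₂ id))) '' G₂.rules with hR
  set σ : M × List (M ⊕ T) → ℤ := fun r =>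
    match r.1 with
    | none => if r.2 = st₁ then -1 else 1
    | some (Sum.inl B) => G₁.sign (B, r.2.filterMap dd₁)
    | some (Sum.inr B) => G₂.sign (B, r.2.filterMap dd₂) with hσ
  have hσ₁ : ∀ A β, σ (f₁ A, β.map (Sum.map f₁ id)) = G₁.sign (A, β) := by
    intro A β
    show G₁.sign (A, (β.map (Sum.map f₁ id)).filterMap dd₁) = G₁.sign (A, β)
    rw [hf₁, filterMap_dd₁]
  have hσ₂ : ∀ A β, σ (f₂ A, β.map (Sum.map f₂ id)) = G₂.sign (A, β) := by
    intro A β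
    show G₂.sign (A, (β.map (Sum.map f₂ id)).filterMap dd₂) = G₂.sign (A, β)
    rw [hf₂, filterMap_dd₂]
  have hst : st₂ ≠ st₁ := by
    rw [hst₂, hst₁, hf₁, hf₂]
    intro h
    have h1 : (Sum.inl (df₂ G₂.start) : M ⊕ T) = Sum.inl (df₁ G₁.start) :=
      (List.cons_eq_cons.1 h).1
    have h2 := Sum.inl_injective h1
    rw [df₁, df₂] at h2
    exact Sum.inr_ne_inl (Option.some.inj h2)
  haveI : Finite G₁.N := G₁.finN
  haveI : Finite G₂.N := G₂.finN
  cases nonempty_fintype G₁.N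
  cases nonempty_fintype G₂.N
  haveI : Finite M := Finite.of_fintype (Option (G₁.N ⊕ G₂.N))
  set G : SignedGrammar T :=
    { N := M
      finN := inferInstance
      start := none
      rules := R
      finRules := by
        refine (((Set.finite_singleton _).insert _).union (G₁.finRules.image _)).union
          (G₂.finRules.image _)
      sign := σ
      sign_valid := by
        rintro r (((rfl | rfl) | ⟨⟨B, γ⟩, hbr, rfl⟩) | ⟨⟨B, γ⟩, hbr, rfl⟩)
        · right; show (if st₁ = st₁ then (-1 : ℤ) else 1) = -1; rw [if_pos rfl]
        · left; show (if st₂ = st₁ then (-1 : ℤ) else 1) = 1; rw [if_neg hst]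
        · show σ (f₁ B, γ.map (Sum.map f₁ id)) = 1 ∨ σ (f₁ B, γ.map (Sum.map f₁ id)) = -1
          rw [hσ₁ B γ]; exact G₁.sign_valid _ hbr
        · show σ (f₂ B, γ.map (Sum.map f₂ id)) = 1 ∨ σ (f₂ B, γ.map (Sum.map f₂ id)) = -1
          rw [hσ₂ B γ]; exact G₂.sign_valid _ hbr } with hG
  -- rule embedding properties
  have hfwd₁ : ∀ A β, (A, β) ∈ G₁.rules → (f₁ A, β.map (Sum.map f₁ id)) ∈ R :=
    fun A β h => Or.inl (Or.inr ⟨(A, β), h, rfl⟩)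
  have hfwd₂ : ∀ A β, (A, β) ∈ G₂.rules → (f₂ A, β.map (Sum.map f₂ id)) ∈ R :=
    fun A β h => Or.inr ⟨(A, β), h, rfl⟩
  have hf₁n : ∀ A : G₁.N, f₁ A ≠ none := fun A h => Option.some_ne_none (Sum.inl A) h
  have hf₂n : ∀ A : G₂.N, f₂ A ≠ none := fun A h => Option.some_ne_none (Sum.inr A) h
  have hf₁₂ : ∀ (A : G₁.N) (B : G₂.N), f₁ A ≠ f₂ B := by
    intro A B h
    rw [hf₁, hf₂, df₁, df₂] at h
    exact Sum.inl_ne_inr (Option.some.inj h)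
  have hbwd₁ : ∀ A β', (f₁ A, β') ∈ R → ∃ β, β' = β.map (Sum.map f₁ id) ∧ (A, β) ∈ G₁.rules := by
    rintro A β' (((h | h) | ⟨⟨B, γ⟩, hbr, heq⟩) | ⟨⟨B, γ⟩, hbr, heq⟩)
    · exact absurd (Prod.ext_iff.1 h).1 (hf₁n A)
    · exact absurd (Prod.ext_iff.1 h).1 (hf₁n A)
    · obtain ⟨h1, h2⟩ := Prod.ext_iff.1 heq
      obtain rfl := df₁_injective h1
      exact ⟨γ, h2.symm, hbr⟩
    · obtain ⟨h1, _⟩ := Prod.ext_iff.1 heq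
      exact absurd h1.symm (hf₁₂ A B)
  have hbwd₂ : ∀ A β', (f₂ A, β') ∈ R → ∃ β, β' = β.map (Sum.map f₂ id) ∧ (A, β) ∈ G₂.rules := by
    rintro A β' (((h | h) | ⟨⟨B, γ⟩, hbr, heq⟩) | ⟨⟨B, γ⟩, hbr, heq⟩)
    · exact absurd (Prod.ext_iff.1 h).1 (hf₂n A)
    · exact absurd (Prod.ext_iff.1 h).1 (hf₂n A)
    · obtain ⟨h1, _⟩ := Prod.ext_iff.1 heq
      exact absurd h1 (hf₁₂ B A)
    · obtain ⟨h1, h2⟩ := Prod.ext_iff.1 heq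
      obtain rfl := df₂_injective h1
      exact ⟨γ, h2.symm, hbr⟩
  have hS₁ : ∀ w, {t' : PTree M T | PTree.Valid R t' ∧ t'.toSymbol = Sum.inl (f₁ G₁.start)
      ∧ t'.yield = w} = PTree.mapN f₁ '' (G₁.parseTreesOf w) :=
    fun w => embed_parseTrees G₁ f₁ df₁_injective R hfwd₁ hbwd₁ w
  have hS₂ : ∀ w, {t' : PTree M T | PTree.Valid R t' ∧ t'.toSymbol = Sum.inl (f₂ G₂.start)
      ∧ t'.yield = w} = PTree.mapN f₂ '' (G₂.parseTreesOf w) :=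
    fun w => embed_parseTrees G₂ f₂ df₂_injective R hfwd₂ hbwd₂ w
  -- the wrapping maps
  set g₁ : PTree G₁.N T → PTree M T := fun s => PTree.node none [PTree.mapN f₁ s] with hg₁
  set g₂ : PTree G₂.N T → PTree M T := fun s => PTree.node none [PTree.mapN f₂ s] with hg₂
  have hyield_wrap : ∀ c : PTree M T, (PTree.node (none : M) [c]).yield = c.yield := by
    intro c; rw [PTree.yield_node]; simp
  -- characterization of parse trees of G
  have hmain : ∀ w, G.parseTreesOf w = g₁ '' G₁.parseTreesOf w ∪ g₂ '' G₂.parseTreesOf w := by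
    intro w
    ext t
    constructor
    · rintro ⟨⟨hv, hsym⟩, hy⟩
      cases t with
      | leaf a => exact absurd hsym (by simp [PTree.toSymbol])
      | node A cs =>
        have hA : A = none := by simpa [PTree.toSymbol] using hsym
        subst hA
        have hr : ((none : M), cs.map PTree.toSymbol) ∈ R := by
          cases hv with | node _ _ hr _ => exact hr
        have hall : ∀ c ∈ cs, PTree.Valid R c := by
          cases hv with | node _ _ _ hall => exact hall
        have hcs : cs.map PTree.toSymbol = st₁ ∨ cs.map PTree.toSymbol = st₂ := by
          rcases hr with ((h | h) | ⟨⟨B, γ⟩, _, heq⟩) | ⟨⟨B, γ⟩, _, heq⟩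
          · exact Or.inl (Prod.ext_iff.1 h).2
          · exact Or.inr (Prod.ext_iff.1 h).2
          · exact absurd (Prod.ext_iff.1 heq).1 (hf₁n B)
          · exact absurd (Prod.ext_iff.1 heq).1 (hf₂n B)
        -- cs is a single tree
        obtain ⟨c, rfl, hcsym⟩ : ∃ c, cs = [c] ∧
            (PTree.toSymbol c = Sum.inl (f₁ G₁.start) ∨ PTree.toSymbol c = Sum.inl (f₂ G₂.start))
            := by
          rcases hcs with h | h
          · rcases cs with _ | ⟨c, cs'⟩
            · rw [hst₁, List.map_nil] at h
              exact absurd h.symm (List.cons_ne_nil _ _)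
            · rw [List.map_cons, hst₁] at h
              obtain ⟨h1, h2⟩ := List.cons_eq_cons.1 h
              rw [List.map_eq_nil_iff.1 h2]
              exact ⟨c, rfl, Or.inl h1⟩
          · rcases cs with _ | ⟨c, cs'⟩
            · rw [hst₂, List.map_nil] at h
              exact absurd h.symm (List.cons_ne_nil _ _)
            · rw [List.map_cons, hst₂] at h
              obtain ⟨h1, h2⟩ := List.cons_eq_cons.1 h
              rw [List.map_eq_nil_iff.1 h2]
              exact ⟨c, rfl, Or.inr h1⟩
        have hcy : c.yield = w := by rw [← hy, hyield_wrap]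
        rcases hcsym with h | h
        · refine Or.inl ?_
          have : c ∈ PTree.mapN f₁ '' (G₁.parseTreesOf w) := by
            rw [← hS₁ w]; exact ⟨hall c (by simp), h, hcy⟩
          obtain ⟨s, hs, rfl⟩ := this
          exact ⟨s, hs, rfl⟩
        · refine Or.inr ?_
          have : c ∈ PTree.mapN f₂ '' (G₂.parseTreesOf w) := by
            rw [← hS₂ w]; exact ⟨hall c (by simp), h, hcy⟩
          obtain ⟨s, hs, rfl⟩ := this
          exact ⟨s, hs, rfl⟩
    · rintro (⟨s, hs, rfl⟩ | ⟨s, hs, rfl⟩)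
      · have hc : PTree.mapN f₁ s ∈ PTree.mapN f₁ '' (G₁.parseTreesOf w) := ⟨s, hs, rfl⟩
        rw [← hS₁ w] at hc
        obtain ⟨hcv, hcsym, hcy⟩ := hc
        refine ⟨⟨PTree.Valid.node none [PTree.mapN f₁ s] ?_ ?_, rfl⟩, ?_⟩
        · rw [List.map_singleton, hcsym]
          exact Or.inl (Or.inl (Or.inl rfl))
        · intro c hc; rw [List.mem_singleton] at hc; subst hc; exact hcv
        · rw [hyield_wrap]; exact hcy
      · have hc : PTree.mapN f₂ s ∈ PTree.mapN f₂ '' (G₂.parseTreesOf w) := ⟨s, hs, rfl⟩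
        rw [← hS₂ w] at hc
        obtain ⟨hcv, hcsym, hcy⟩ := hc
        refine ⟨⟨PTree.Valid.node none [PTree.mapN f₂ s] ?_ ?_, rfl⟩, ?_⟩
        · rw [List.map_singleton, hcsym]
          exact Or.inl (Or.inl (Or.inr rfl))
        · intro c hc; rw [List.mem_singleton] at hc; subst hc; exact hcv
        · rw [hyield_wrap]; exact hcy
  -- injectivity of the wrapping maps
  have hg₁inj : Function.Injective g₁ := by
    intro s₁ s₂ h
    rw [hg₁] at h
    simp only [PTree.node.injEq, List.cons.injEq, and_true, true_and] at h
    exact PTree.mapN_injective f₁ (fun m => match m with | some (Sum.inl B) => B | _ => G₁.start)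
      (fun x => rfl) h
  have hg₂inj : Function.Injective g₂ := by
    intro s₁ s₂ h
    rw [hg₂] at h
    simp only [PTree.node.injEq, List.cons.injEq, and_true, true_and] at h
    exact PTree.mapN_injective f₂ (fun m => match m with | some (Sum.inr B) => B | _ => G₂.start)
      (fun x => rfl) h
  -- disjointness
  have hdisj : ∀ w, Disjoint (g₁ '' G₁.parseTreesOf w) (g₂ '' G₂.parseTreesOf w) := by
    intro w
    rw [Set.disjoint_left]
    rintro t ⟨s₁, hs₁, rfl⟩ ⟨s₂, hs₂, heq⟩
    rw [hg₁, hg₂] at heq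
    simp only [PTree.node.injEq, List.cons.injEq, and_true, true_and] at heq
    have h1 := congrArg PTree.toSymbol heq
    rw [PTree.toSymbol_mapN, PTree.toSymbol_mapN, hs₂.1.2, hs₁.1.2] at h1
    simp only [Sum.map_inl] at h1
    exact hf₁₂ G₁.start G₂.start (Sum.inl_injective h1).symm
  have hadm : G.Admissible := by
    intro w
    rw [hmain w]
    exact ((hadm₁ w).image _).union ((hadm₂ w).image _)
  -- the sign of wrapped trees
  have hsign₁ : ∀ w, ∀ s ∈ G₁.parseTreesOf w, PTree.sign σ (g₁ s) = -(PTree.sign G₁.sign s) := by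
    rintro w s ⟨⟨_, hsym⟩, _⟩
    rw [hg₁]
    rw [PTree.sign_node, List.map_singleton, List.map_singleton, List.prod_singleton]
    rw [PTree.toSymbol_mapN, hsym]
    have : σ (none, [Sum.inl (f₁ G₁.start)]) = -1 := by
      show (if st₁ = st₁ then (-1 : ℤ) else 1) = -1
      rw [if_pos rfl]
    rw [show (Sum.map f₁ id (Sum.inl G₁.start) : M ⊕ T) = Sum.inl (f₁ G₁.start) from rfl, this]
    rw [PTree.sign_mapN f₁ G₁.sign σ hσ₁ s]
    ring
  have hsign₂ : ∀ w, ∀ s ∈ G₂.parseTreesOf w, PTree.sign σ (g₂ s) = PTree.sign G₂.sign s := by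
    rintro w s ⟨⟨_, hsym⟩, _⟩
    rw [hg₂]
    rw [PTree.sign_node, List.map_singleton, List.map_singleton, List.prod_singleton]
    rw [PTree.toSymbol_mapN, hsym]
    have : σ (none, [Sum.inl (f₂ G₂.start)]) = 1 := by
      show (if st₂ = st₁ then (-1 : ℤ) else 1) = 1
      rw [if_neg hst]
    rw [show (Sum.map f₂ id (Sum.inl G₂.start) : M ⊕ T) = Sum.inl (f₂ G₂.start) from rfl, this]
    rw [PTree.sign_mapN f₂ G₂.sign σ hσ₂ s]
    ring
  -- the count of G
  have hcount : ∀ w, G.count w = G₂.count w - G₁.count w := by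
    intro w
    show (∑ᶠ t ∈ G.parseTreesOf w, PTree.sign σ t) = _
    rw [hmain w, finsum_mem_union (hdisj w) ((hadm₁ w).image _) ((hadm₂ w).image _)]
    rw [finsum_mem_image (hg₁inj.injOn), finsum_mem_image (hg₂inj.injOn)]
    rw [finsum_mem_congr rfl (hsign₁ w), finsum_mem_congr rfl (hsign₂ w)]
    rw [finsum_mem_neg_distrib _ (hadm₁ w)]
    show -(G₁.count w) + G₂.count w = G₂.count w - G₁.count w
    ring
  refine ⟨G, hadm, ?_, ?_⟩
  · rintro w ⟨hw₂, hw₁⟩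
    rw [hcount w, hin₂ w hw₂, hout₁ w hw₁]; norm_num
  · intro w hw
    rw [hcount w]
    by_cases h1 : w ∈ L₁
    · rw [hin₁ w h1, hin₂ w (hsub h1)]; norm_num
    · have h2 : w ∉ L₂ := fun h => hw ⟨h, h1⟩
      rw [hout₁ w h1, hout₂ w h2]; norm_num
end
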